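/- Define V_n = (1/18^{ℓ(n)}) · (1/8) · (2^{ℓ(n)+1} - n + (n - 2^{ℓ(n)})/9) + 1/n² for n ≥ 2, where ℓ(n) is the unique natural number with 2^{ℓ(n)} ≤ n < 2^{ℓ(n)+1}. Then lim_{n→∞} V_n = 0 and lim_{n→∞} (2 log n)/(-log V_n) = 1. -/

import Mathlib

open MeasureTheory Real Set Filter
open scoped ENNReal Topology

noncomputable section

/-- First generating map of the Cantor set. -/
def T1 (x : ℝ) : ℝ := x / 3

/-- Second generating map of the Cantor set. -/
def T2 (x : ℝ) : ℝ := x / 3 + 2 / 3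

/-- Map indexed by `Fin 2`. -/
def Tm : Fin 2 → ℝ → ℝ := ![T1, T2]

/-- Composition `T_σ = T_{σ₁} ∘ ⋯ ∘ T_{σ_k}` for a word over `{1,2}` (as a list over `Fin 2`). -/
def Tw (l : List (Fin 2)) : ℝ → ℝ := l.foldr (fun i g => Tm i ∘ g) id

/-- Squared Euclidean distance between `x ∈ ℝ` (identified with `(x,0)`) and `(a,b) ∈ ℝ²`. -/
def rho (x : ℝ) (p : ℝ × ℝ) : ℝ := (x - p.1) ^ 2 + p.2 ^ 2

/-- Distortion error of a set `α ⊆ ℝ²` for `P`. -/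
def distortion (P : Measure ℝ) (α : Set (ℝ × ℝ)) : ℝ := ∫ x, ⨅ a : α, rho x (a : ℝ × ℝ) ∂P

/-- The constraint `S_j = {(x, 1/j) : 0 ≤ x ≤ 1}`. -/
def Sj (j : ℕ) : Set (ℝ × ℝ) := {p | p.1 ∈ Icc (0 : ℝ) 1 ∧ p.2 = 1 / (j : ℝ)}

/-- The `n`th constrained quantization error for `P` with respect to the family `Sj`. -/
def Vc (P : Measure ℝ) (n : ℕ) : ℝ :=
  sInf {e : ℝ | ∃ α : Finset (ℝ × ℝ), α.Nonempty ∧ α.card ≤ n ∧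
    (↑α : Set (ℝ × ℝ)) ⊆ ⋃ j ∈ Finset.Icc 1 n, Sj j ∧ e = distortion P (↑α : Set (ℝ × ℝ))}

set_option maxHeartbeats 2000000 in
theorem constrained_dimension_one (L : ℕ → ℕ)
    (hL : ∀ n, 2 ≤ n → 2 ^ L n ≤ n ∧ n < 2 ^ (L n + 1)) (V : ℕ → ℝ)
    (hV : ∀ n, 2 ≤ n → V n =
      (1 / 18 ^ L n) * (1 / 8) * (2 ^ (L n + 1) - (n : ℝ) + ((n : ℝ) - 2 ^ L n) / 9) +
        1 / (n : ℝ) ^ 2) :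
    Tendsto V atTop (𝓝 0) ∧
      Tendsto (fun n : ℕ => (2 * Real.log (n : ℝ)) / (-Real.log (V n))) atTop (𝓝 1) := by
  have hlog2 : (0:ℝ) < Real.log 2 := Real.log_pos (by norm_num)
  -- L n tends to infinity
  have hLtop : Tendsto L atTop atTop := by
    rw [tendsto_atTop_atTop]
    intro k
    refine ⟨max 2 (2^k), fun n hn => ?_⟩
    have h2n : 2 ≤ n := le_trans (le_max_left _ _) hn
    have hk : 2^k ≤ n := le_trans (le_max_right _ _) hn
    have h := (hL n h2n).2
    have h2 : 2^k < 2^(L n + 1) := lt_of_le_of_lt hk h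
    have := (pow_lt_pow_iff_right₀ (a := 2) (by norm_num)).1 h2
    omega
  -- key bounds on V n
  have key : ∀ n, 2 ≤ n →
      1/(4*((2:ℝ)^(L n))^2) ≤ V n ∧ V n ≤ 2/((2:ℝ)^(L n))^2 := by
    intro n hn
    set p : ℝ := 2^(L n) with hpdef
    have hppos : 0 < p := by positivity
    have hpn : p ≤ (n:ℝ) := by
      have := (hL n hn).1
      have : ((2:ℕ)^(L n) : ℝ) ≤ (n:ℝ) := by exact_mod_cast this
      simpa using this
    have hn2p : (n:ℝ) ≤ 2*p := by
      have h := (hL n hn).2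
      have h' : (n:ℝ) < ((2:ℕ)^(L n + 1) : ℝ) := by exact_mod_cast h
      rw [pow_succ] at h'
      push_cast at h'
      linarith
    have hnpos : (0:ℝ) < n := lt_of_lt_of_le hppos hpn
    rw [hV n hn]
    set B : ℝ := 2 ^ (L n + 1) - (n : ℝ) + ((n : ℝ) - 2 ^ L n) / 9 with hBdef
    have hrw : (2:ℝ)^(L n + 1) = 2*p := by rw [pow_succ]; ring
    have hB0 : 0 ≤ B := by rw [hBdef, hrw]; linarith
    have hBp : B ≤ p := by rw [hBdef, hrw]; linarith
    have h18pos : (0:ℝ) < 18^(L n) := by positivity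
    have hp3 : p^3 ≤ (18:ℝ)^(L n) := by
      have e : p^3 = (8:ℝ)^(L n) := by
        rw [hpdef, ← pow_mul, mul_comm, pow_mul]; norm_num
      rw [e]
      exact pow_le_pow_left₀ (by norm_num) (by norm_num) _
    have ht1ub : (1 / 18 ^ L n) * (1/8) * B ≤ 1/(8*p^2) := by
      have h1 : (1 / 18 ^ L n) * (1/8) * B ≤ (1 / 18 ^ L n) * (1/8) * p := by
        gcongr
      refine h1.trans ?_
      rw [show (1 / 18 ^ L n : ℝ) * (1/8) * p = p / (8 * 18 ^ L n) by ring,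
        div_le_div_iff₀ (by positivity) (by positivity)]
      nlinarith [hp3, hppos, hppos.le]
    have ht10 : 0 ≤ (1 / 18 ^ L n) * (1/8) * B := by positivity
    have ht2lb : 1/(4*p^2) ≤ 1/(n:ℝ)^2 := by
      rw [div_le_div_iff₀ (by positivity) (by positivity)]
      nlinarith
    have ht2ub : 1/(n:ℝ)^2 ≤ 1/p^2 := by
      rw [div_le_div_iff₀ (by positivity) (by positivity)]
      nlinarith
    constructor
    · linarith
    · have e1 : 1/(8*p^2) = (1/8) * (1/p^2) := by ring
      have e2 : 2/p^2 = 2 * (1/p^2) := by ring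
      have hx : 0 ≤ 1/p^2 := by positivity
      rw [e1] at ht1ub
      rw [e2]
      linarith
  have hVpos : ∀ n, 2 ≤ n → 0 < V n := by
    intro n hn
    have := (key n hn).1
    have hppos : (0:ℝ) < 2^(L n) := by positivity
    have : (0:ℝ) < 1/(4*((2:ℝ)^(L n))^2) := by positivity
    linarith [(key n hn).1]
  constructor
  · -- Tendsto V atTop (𝓝 0)
    have hub : Tendsto (fun n : ℕ => 2/((2:ℝ)^(L n))^2) atTop (𝓝 0) := by
      have h1 : Tendsto (fun k : ℕ => 2/((2:ℝ)^k)^2) atTop (𝓝 0) := by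
        have h2 : Tendsto (fun k : ℕ => (2:ℝ) * (1/4)^k) atTop (𝓝 (2 * 0)) :=
          (tendsto_pow_atTop_nhds_zero_of_lt_one (by norm_num) (by norm_num)).const_mul 2
        simp only [mul_zero] at h2
        refine h2.congr (fun k => ?_)
        have e : ((2:ℝ)^k)^2 = 4^k := by
          rw [← pow_mul, mul_comm, pow_mul]; norm_num
        rw [e, one_div, inv_pow, div_eq_mul_inv, mul_comm]
      exact h1.comp hLtop
    refine tendsto_of_tendsto_of_tendsto_of_le_of_le' tendsto_const_nhds hub ?_ ?_
    · filter_upwards [eventually_ge_atTop 2] with n hn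
      exact (hVpos n hn).le
    · filter_upwards [eventually_ge_atTop 2] with n hn
      exact (key n hn).2
  · -- the dimension limit
    -- per-n log bounds
    have hbound : ∀ n, 2 ≤ n →
        ((L n : ℝ) - 3)/(L n : ℝ) ≤ (2 * Real.log n)/(-Real.log (V n)) ∧
        (2 * Real.log n)/(-Real.log (V n)) ≤ ((L n : ℝ) + 3)/(L n : ℝ) := by
      intro n hn
      set ℓ : ℝ := (L n : ℝ) with hldef
      set c : ℝ := Real.log 2 with hcdef
      have hL1 : 1 ≤ L n := by
        have h := (hL n hn).2
        have : (2:ℕ)^1 < 2^(L n + 1) := lt_of_le_of_lt (by simpa using hn) h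
        have := (pow_lt_pow_iff_right₀ (a := 2) (by norm_num)).1 this
        omega
      have hℓ1 : (1:ℝ) ≤ ℓ := by rw [hldef]; exact_mod_cast hL1
      have hℓpos : (0:ℝ) < ℓ := by linarith
      set p : ℝ := 2^(L n) with hpdef
      have hppos : 0 < p := by positivity
      have hpn : p ≤ (n:ℝ) := by
        have := (hL n hn).1
        have : ((2:ℕ)^(L n) : ℝ) ≤ (n:ℝ) := by exact_mod_cast this
        simpa using this
      have hn2p : (n:ℝ) ≤ 2*p := by
        have h := (hL n hn).2
        have h' : (n:ℝ) < ((2:ℕ)^(L n + 1) : ℝ) := by exact_mod_cast h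
        rw [pow_succ] at h'
        push_cast at h'
        linarith
      have hnpos : (0:ℝ) < n := lt_of_lt_of_le hppos hpn
      have hlogp : Real.log p = ℓ * c := by
        rw [hpdef, Real.log_pow, hldef, hcdef]
      -- bounds on log n
      have hlogn_lb : ℓ * c ≤ Real.log n := by
        rw [← hlogp]; exact Real.log_le_log hppos hpn
      have hlogn_ub : Real.log n ≤ (ℓ + 1) * c := by
        have : Real.log n ≤ Real.log (2*p) := Real.log_le_log hnpos hn2p
        rw [Real.log_mul (by norm_num) (ne_of_gt hppos), hlogp] at this
        linarith
      have hVlb := (key n hn).1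
      have hVub := (key n hn).2
      have hVp := hVpos n hn
      -- bounds on -log (V n)
      have hlogV_ub : Real.log (V n) ≤ (1 - 2*ℓ) * c := by
        have h1 : Real.log (V n) ≤ Real.log (2/p^2) := Real.log_le_log hVp hVub
        rw [Real.log_div (by norm_num) (by positivity), Real.log_pow, hlogp] at h1
        push_cast at h1
        rw [← hcdef] at h1
        linarith
      have hlogV_lb : -((2*ℓ + 2) * c) ≤ Real.log (V n) := by
        have hq : (0:ℝ) < 1/(4*p^2) := by positivity
        have h1 : Real.log (1/(4*p^2)) ≤ Real.log (V n) := Real.log_le_log hq hVlb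
        rw [one_div, Real.log_inv, Real.log_mul (by norm_num) (by positivity),
          Real.log_pow, hlogp, show (4:ℝ) = 2^2 by norm_num, Real.log_pow] at h1
        push_cast at h1
        rw [← hcdef] at h1
        linarith
      set D : ℝ := -Real.log (V n) with hDdef
      have hD_lb : (2*ℓ - 1) * c ≤ D := by rw [hDdef]; linarith [hlogV_ub]
      have hD_ub : D ≤ (2*ℓ + 2) * c := by rw [hDdef]; linarith [hlogV_lb]
      have hDpos : 0 < D :=
        lt_of_lt_of_le (mul_pos (by linarith) hlog2) hD_lb
      have hlogn_pos : 0 ≤ Real.log n :=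
        le_trans (mul_nonneg hℓpos.le hlog2.le) hlogn_lb
      constructor
      · rw [div_le_div_iff₀ hℓpos hDpos]
        rcases le_or_gt ℓ 3 with h3 | h3
        · have h1 : (ℓ - 3) * D ≤ 0 := mul_nonpos_of_nonpos_of_nonneg (by linarith) hDpos.le
          have h2 : 0 ≤ 2 * Real.log n * ℓ :=
            mul_nonneg (mul_nonneg (by norm_num) hlogn_pos) hℓpos.le
          linarith
        · have h1 : (ℓ - 3) * D ≤ (ℓ - 3) * ((2*ℓ + 2) * c) := by
            have : (0:ℝ) ≤ ℓ - 3 := by linarith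
            exact mul_le_mul_of_nonneg_left hD_ub this
          have h2 : 2 * (ℓ * c) * ℓ ≤ 2 * Real.log n * ℓ := by
            have := mul_le_mul_of_nonneg_left hlogn_lb (by norm_num : (0:ℝ) ≤ 2)
            exact mul_le_mul_of_nonneg_right this hℓpos.le
          have h4 : (ℓ - 3) * ((2*ℓ + 2) * c) ≤ 2 * (ℓ * c) * ℓ := by
            nlinarith [mul_nonneg hℓpos.le hlog2.le, hlog2.le]
          linarith
      · rw [div_le_div_iff₀ hDpos hℓpos]
        have h1 : 2 * Real.log n * ℓ ≤ 2 * ((ℓ+1)*c) * ℓ := by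
          have := mul_le_mul_of_nonneg_left hlogn_ub (by norm_num : (0:ℝ) ≤ 2)
          exact mul_le_mul_of_nonneg_right this hℓpos.le
        have h2 : (ℓ + 3) * ((2*ℓ - 1) * c) ≤ (ℓ + 3) * D := by
          exact mul_le_mul_of_nonneg_left hD_lb (by linarith)
        have h4 : 2 * ((ℓ+1)*c) * ℓ ≤ (ℓ + 3) * ((2*ℓ - 1) * c) := by
          nlinarith [mul_nonneg (sub_nonneg.2 hℓ1) hlog2.le]
        linarith
    -- squeeze
    have haux1 : Tendsto (fun k : ℕ => ((k:ℝ) - 3)/(k:ℝ)) atTop (𝓝 1) := by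
      have h : Tendsto (fun k : ℕ => 1 - (3:ℝ)/(k:ℝ)) atTop (𝓝 (1 - 0)) :=
        tendsto_const_nhds.sub (tendsto_const_div_atTop_nhds_zero_nat 3)
      rw [sub_zero] at h
      refine h.congr' ?_
      filter_upwards [eventually_ge_atTop 1] with k hk
      have : (k:ℝ) ≠ 0 := by positivity
      field_simp
    have haux2 : Tendsto (fun k : ℕ => ((k:ℝ) + 3)/(k:ℝ)) atTop (𝓝 1) := by
      have h : Tendsto (fun k : ℕ => 1 + (3:ℝ)/(k:ℝ)) atTop (𝓝 (1 + 0)) :=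
        tendsto_const_nhds.add (tendsto_const_div_atTop_nhds_zero_nat 3)
      rw [add_zero] at h
      refine h.congr' ?_
      filter_upwards [eventually_ge_atTop 1] with k hk
      have : (k:ℝ) ≠ 0 := by positivity
      field_simp
    refine tendsto_of_tendsto_of_tendsto_of_le_of_le' (haux1.comp hLtop) (haux2.comp hLtop) ?_ ?_
    · filter_upwards [eventually_ge_atTop 2] with n hn
      exact (hbound n hn).1
    · filter_upwards [eventually_ge_atTop 2] with n hn
      exact (hbound n hn).2
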